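/- Let L and D be N×N matrices with non-negative real entries such that L_{jl} ≤ L_{jj} and L_{jl} ≤ L_{ll} for all j,l, and D_{jl} ≤ max{D_{jj}, D_{ll}} for all j,l. Then (1/N) · Σ_{j,l=1}^{N} √(L_{jl} D_{jl}) ≤ 2 · Σ_{j=1}^{N} √(L_{jj} D_{jj}). -/

import Mathlib

/-- matrix lemma on square roots of entrywise-dominated matrices. -/
theorem matrix_sqrt_sum_bound (N : ℕ) (L D : Fin N → Fin N → ℝ)
    (hL0 : ∀ j l, 0 ≤ L j l) (hD0 : ∀ j l, 0 ≤ D j l)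
    (hL1 : ∀ j l, L j l ≤ L j j) (hL2 : ∀ j l, L j l ≤ L l l)
    (hD : ∀ j l, D j l ≤ max (D j j) (D l l)) :
    (1 / (N : ℝ)) * ∑ j, ∑ l, Real.sqrt (L j l * D j l)
      ≤ 2 * ∑ j, Real.sqrt (L j j * D j j) := by
  rcases Nat.eq_zero_or_pos N with h | hN
  · subst h; simp
  have hNpos : (0:ℝ) < N := by exact_mod_cast hN
  have key : ∀ j l, Real.sqrt (L j l * D j l)
      ≤ Real.sqrt (L j j * D j j) + Real.sqrt (L l l * D l l) := by
    intro j l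
    rcases le_total (D l l) (D j j) with h | h
    · have h1 : Real.sqrt (L j l * D j l) ≤ Real.sqrt (L j j * D j j) := by
        apply Real.sqrt_le_sqrt
        have h2 := hD j l
        rw [max_eq_left h] at h2
        exact mul_le_mul (hL1 j l) h2 (hD0 j l) (hL0 j j)
      linarith [Real.sqrt_nonneg (L l l * D l l)]
    · have h1 : Real.sqrt (L j l * D j l) ≤ Real.sqrt (L l l * D l l) := by
        apply Real.sqrt_le_sqrt
        have h2 := hD j l
        rw [max_eq_right h] at h2
        exact mul_le_mul (hL2 j l) h2 (hD0 j l) (hL0 l l)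
      linarith [Real.sqrt_nonneg (L j j * D j j)]
  have hsum : ∑ j, ∑ l, Real.sqrt (L j l * D j l)
      ≤ 2 * N * ∑ j, Real.sqrt (L j j * D j j) := by
    calc ∑ j, ∑ l, Real.sqrt (L j l * D j l)
        ≤ ∑ j : Fin N, ∑ l : Fin N,
            (Real.sqrt (L j j * D j j) + Real.sqrt (L l l * D l l)) :=
          Finset.sum_le_sum (fun j _ => Finset.sum_le_sum (fun l _ => key j l))
      _ = 2 * N * ∑ j, Real.sqrt (L j j * D j j) := by
          simp [Finset.sum_add_distrib, Finset.mul_sum, Finset.card_fin]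
          rw [← Finset.sum_add_distrib]
          exact Finset.sum_congr rfl (fun x _ => by ring)
  calc (1 / (N:ℝ)) * ∑ j, ∑ l, Real.sqrt (L j l * D j l)
      ≤ (1 / (N:ℝ)) * (2 * N * ∑ j, Real.sqrt (L j j * D j j)) :=
        mul_le_mul_of_nonneg_left hsum (by positivity)
    _ = 2 * ∑ j, Real.sqrt (L j j * D j j) := by field_simp
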